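/- Let n ≥ 3 and u ∈ C¹(ℝⁿ \ {0}). Suppose that for every y ∈ ℝⁿ \ {0}, every 0 < λ < |y|, and every x ∈ ℝⁿ \ {0} with |x − y| ≥ λ, one has u_{y,λ}(x) ≤ u(x). Then u is radially symmetric about the origin, and writing u(x) = ū(|x|), the function ū is non-increasing on (0,∞). -/

import Mathlib

open scoped BigOperators

/-- The Kelvin transform `u_{y,λ}` of `u : ℝⁿ \ {0} → ℝ`:
`u_{y,λ}(x) = (λ/|x−y|)^{n−2} u(y + λ²(x−y)/|x−y|²)`. -/
noncomputable def kelvin {n : ℕ} (u : EuclideanSpace ℝ (Fin n) → ℝ)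
    (y : EuclideanSpace ℝ (Fin n)) (lam : ℝ) (x : EuclideanSpace ℝ (Fin n)) : ℝ :=
  (lam / ‖x - y‖) ^ (n - 2) * u (y + (lam ^ 2 / ‖x - y‖ ^ 2) • (x - y))

open Filter Topology

set_option maxHeartbeats 2000000 in
lemma key_lt {n : ℕ} (u : EuclideanSpace ℝ (Fin n) → ℝ)
    (h : ∀ y : EuclideanSpace ℝ (Fin n), y ≠ 0 → ∀ lam : ℝ, 0 < lam → lam < ‖y‖ →
      ∀ x : EuclideanSpace ℝ (Fin n), x ≠ 0 → lam ≤ ‖x - y‖ →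
        kelvin u y lam x ≤ u x)
    (a b : EuclideanSpace ℝ (Fin n)) (ha : a ≠ 0)
    (hab : ‖a‖ < ‖b‖) : u b ≤ u a := by
  set d : ℝ := ‖b - a‖ with hd
  have hba : b ≠ a := by
    intro h'; rw [h'] at hab; exact lt_irrefl _ hab
  have hd0 : 0 < d := by
    rw [hd]; exact norm_pos_iff.mpr (sub_ne_zero.mpr hba)
  set e : EuclideanSpace ℝ (Fin n) := d⁻¹ • (b - a) with he
  have hne : ‖e‖ = 1 := by
    rw [he, norm_smul, norm_inv, Real.norm_eq_abs, abs_of_pos hd0, ← hd]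
    field_simp
  have hde : d • e = b - a := by
    rw [he, smul_smul]
    rw [mul_inv_cancel₀ hd0.ne', one_smul]
  have hinner : 2 * (inner ℝ b (b - a) : ℝ) = ‖b‖ ^ 2 - ‖a‖ ^ 2 + d ^ 2 := by
    have h1 : (inner ℝ b (b - a) : ℝ) = ‖b‖ ^ 2 - inner ℝ b a := by
      rw [inner_sub_right, real_inner_self_eq_norm_sq]
    have h2 : d ^ 2 = ‖b‖ ^ 2 - 2 * inner ℝ b a + ‖a‖ ^ 2 := by
      rw [hd, @norm_sub_sq_real]
    linarith
  have hbe : (inner ℝ b e : ℝ) = d⁻¹ * (inner ℝ b (b - a) : ℝ) := by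
    rw [he, real_inner_smul_right]
  clear_value d e
  have main : ∀ t : ℝ, 0 < t →
      (Real.sqrt (t * (t + d)) / (t + d)) ^ (n - 2) * u b ≤ u a := by
    intro t ht
    have htd : 0 < t + d := by linarith
    set lam : ℝ := Real.sqrt (t * (t + d)) with hlam
    set y : EuclideanSpace ℝ (Fin n) := b + t • e with hy
    clear_value lam y
    have hlampos : 0 < lam := by
      rw [hlam]; exact Real.sqrt_pos.mpr (by positivity)
    have hlamsq : lam ^ 2 = t * (t + d) := by
      rw [hlam]; exact Real.sq_sqrt (by positivity)
    have hay : a - y = (-(t + d)) • e := by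
      have : a = b - d • e := by rw [hde]; abel
      rw [this, hy, neg_smul, add_smul]; abel
    have hnay : ‖a - y‖ = t + d := by
      rw [hay, norm_smul, hne, Real.norm_eq_abs, abs_neg, abs_of_pos htd, mul_one]
    have hysq : ‖y‖ ^ 2 = ‖b‖ ^ 2 + 2 * (t * inner ℝ b e) + t ^ 2 := by
      rw [hy, @norm_add_sq_real, real_inner_smul_right, norm_smul, Real.norm_eq_abs,
        abs_of_pos ht, hne, mul_one]
    have hlt : lam ^ 2 < ‖y‖ ^ 2 := by
      set I : ℝ := (inner ℝ b (b - a) : ℝ) with hI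
      have hb2 : ‖a‖ ^ 2 < ‖b‖ ^ 2 := by
        have := norm_nonneg a
        nlinarith
      have hdi : d⁻¹ * d = 1 := inv_mul_cancel₀ hd0.ne'
      have key : 2 * (t * (d⁻¹ * I)) - t * d = t * d⁻¹ * (‖b‖ ^ 2 - ‖a‖ ^ 2) := by
        linear_combination t * d⁻¹ * hinner + t * d * hdi
      have hpos : 0 < t * d⁻¹ * (‖b‖ ^ 2 - ‖a‖ ^ 2) :=
        mul_pos (mul_pos ht (inv_pos.mpr hd0)) (sub_pos.mpr hb2)
      rw [hlamsq, hysq, hbe]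
      nlinarith [key, hpos, sq_nonneg ‖b‖, norm_nonneg b, hb2, norm_nonneg a, sq_nonneg ‖a‖]
    have hlamlty : lam < ‖y‖ := by
      have := Real.sqrt_lt_sqrt (by positivity : (0:ℝ) ≤ lam ^ 2) hlt
      rwa [Real.sqrt_sq hlampos.le, Real.sqrt_sq (norm_nonneg y)] at this
    have hy0 : y ≠ 0 := by
      intro h0
      rw [h0, norm_zero] at hlamlty
      linarith
    have hlamle : lam ≤ ‖a - y‖ := by
      rw [hnay, hlam]
      have : t * (t + d) ≤ (t + d) ^ 2 := by nlinarith
      calc Real.sqrt (t * (t + d)) ≤ Real.sqrt ((t + d) ^ 2) := Real.sqrt_le_sqrt this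
        _ = t + d := Real.sqrt_sq htd.le
    have hk := h y hy0 lam hlampos hlamlty a ha hlamle
    have hkval : kelvin u y lam a = (lam / (t + d)) ^ (n - 2) * u b := by
      rw [kelvin, hnay]
      congr 2
      have hc : lam ^ 2 / (t + d) ^ 2 * (-(t + d)) = -t := by
        rw [hlamsq]; field_simp
      rw [hay, smul_smul, hc, hy, neg_smul]
      abel
    rw [hkval] at hk
    exact hk
  -- limit as t → ∞
  have h0 : Tendsto (fun t : ℝ => d / (t + d)) atTop (𝓝 0) :=
    Tendsto.div_atTop tendsto_const_nhds (tendsto_atTop_add_const_right _ d tendsto_id)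
  have h1 : Tendsto (fun t : ℝ => t / (t + d)) atTop (𝓝 1) := by
    have h1' : Tendsto (fun t : ℝ => 1 - d / (t + d)) atTop (𝓝 (1 - 0)) :=
      (tendsto_const_nhds : Tendsto (fun _ : ℝ => (1:ℝ)) atTop (𝓝 1)).sub h0
    rw [sub_zero] at h1'
    refine h1'.congr' ?_
    filter_upwards [eventually_gt_atTop 0] with t ht
    have htd : t + d ≠ 0 := by positivity
    field_simp
    ring
  have h2 : Tendsto (fun t : ℝ => Real.sqrt (t / (t + d))) atTop (𝓝 1) := by
    have := (Real.continuous_sqrt.tendsto 1).comp h1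
    simpa [Function.comp_def] using this
  have h3 : Tendsto (fun t : ℝ => Real.sqrt (t / (t + d)) ^ (n - 2) * u b) atTop
      (𝓝 (u b)) := by
    have := (h2.pow (n - 2)).mul_const (u b)
    simpa using this
  have h4 : Tendsto (fun t : ℝ => (Real.sqrt (t * (t + d)) / (t + d)) ^ (n - 2) * u b)
      atTop (𝓝 (u b)) := by
    refine h3.congr' ?_
    filter_upwards [eventually_gt_atTop 0] with t ht
    have htd : (0:ℝ) < t + d := by linarith
    have hs : (0:ℝ) < Real.sqrt (t + d) := Real.sqrt_pos.mpr htd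
    have heq : Real.sqrt (t / (t + d)) = Real.sqrt (t * (t + d)) / (t + d) := by
      rw [Real.sqrt_div ht.le, Real.sqrt_mul ht.le]
      rw [div_eq_div_iff hs.ne' (by positivity : (t+d) ≠ 0)]
      rw [mul_assoc, Real.mul_self_sqrt htd.le]
    rw [heq]
  refine le_of_tendsto h4 ?_
  filter_upwards [eventually_gt_atTop 0] with t ht
  exact main t ht

lemma key_le {n : ℕ} (u : EuclideanSpace ℝ (Fin n) → ℝ)
    (hu : ContDiffOn ℝ 1 u {x | x ≠ 0})
    (h : ∀ y : EuclideanSpace ℝ (Fin n), y ≠ 0 → ∀ lam : ℝ, 0 < lam → lam < ‖y‖ →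
      ∀ x : EuclideanSpace ℝ (Fin n), x ≠ 0 → lam ≤ ‖x - y‖ →
        kelvin u y lam x ≤ u x)
    (a b : EuclideanSpace ℝ (Fin n)) (ha : a ≠ 0) (hb : b ≠ 0)
    (hab : ‖a‖ ≤ ‖b‖) : u b ≤ u a := by
  rcases lt_or_eq_of_le hab with hlt | heq
  · exact key_lt u h a b ha hlt
  · -- ‖a‖ = ‖b‖ : approximate b by s • b, s > 1
    have hopen : IsOpen {x : EuclideanSpace ℝ (Fin n) | x ≠ 0} := isOpen_ne
    have hcont : ContinuousAt u b :=
      hu.continuousOn.continuousAt (hopen.mem_nhds hb)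
    have hbpos : 0 < ‖b‖ := norm_pos_iff.mpr hb
    have hten : Filter.Tendsto (fun s : ℝ => u (s • b)) (𝓝[>] (1:ℝ)) (𝓝 (u b)) := by
      have hc : Filter.Tendsto (fun s : ℝ => s • b) (𝓝 (1:ℝ)) (𝓝 ((1:ℝ) • b)) :=
        ((continuous_id.smul continuous_const).tendsto (1:ℝ))
      rw [one_smul] at hc
      exact hcont.tendsto.comp (hc.mono_left nhdsWithin_le_nhds)
    refine le_of_tendsto hten ?_
    filter_upwards [self_mem_nhdsWithin] with s hs
    have hs1 : (1:ℝ) < s := hs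
    have hsb : ‖a‖ < ‖s • b‖ := by
      rw [norm_smul, Real.norm_eq_abs, abs_of_pos (by linarith : (0:ℝ) < s), heq]
      nlinarith
    exact key_lt u h a (s • b) ha hsb

theorem stmt4 (n : ℕ) (hn : 3 ≤ n) (u : EuclideanSpace ℝ (Fin n) → ℝ)
    (hu : ContDiffOn ℝ 1 u {x | x ≠ 0})
    (h : ∀ y : EuclideanSpace ℝ (Fin n), y ≠ 0 → ∀ lam : ℝ, 0 < lam → lam < ‖y‖ →
      ∀ x : EuclideanSpace ℝ (Fin n), x ≠ 0 → lam ≤ ‖x - y‖ →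
        kelvin u y lam x ≤ u x) :
    (∀ x y : EuclideanSpace ℝ (Fin n), x ≠ 0 → y ≠ 0 → ‖x‖ = ‖y‖ → u x = u y) ∧
    (∃ ubar : ℝ → ℝ,
      (∀ x : EuclideanSpace ℝ (Fin n), x ≠ 0 → u x = ubar ‖x‖) ∧
      AntitoneOn ubar (Set.Ioi (0 : ℝ))) := by
  have sym : ∀ x y : EuclideanSpace ℝ (Fin n), x ≠ 0 → y ≠ 0 → ‖x‖ = ‖y‖ → u x = u y := by
    intro x y hx hy hxy
    exact le_antisymm (key_le u hu h y x hy hx hxy.ge) (key_le u hu h x y hx hy hxy.le)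
  refine ⟨sym, ?_⟩
  have hn0 : 0 < n := by omega
  set e₁ : EuclideanSpace ℝ (Fin n) := EuclideanSpace.single (⟨0, hn0⟩ : Fin n) (1:ℝ) with he₁
  have hne₁ : ‖e₁‖ = 1 := by
    rw [he₁, EuclideanSpace.norm_single, norm_one]
  refine ⟨fun r => u (r • e₁), ?_, ?_⟩
  · intro x hx
    have hxpos : 0 < ‖x‖ := norm_pos_iff.mpr hx
    have hnorm : ‖(‖x‖ : ℝ) • e₁‖ = ‖x‖ := by
      rw [norm_smul, Real.norm_eq_abs, abs_of_pos hxpos, hne₁, mul_one]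
    have hne0 : (‖x‖ : ℝ) • e₁ ≠ 0 := by
      intro h0
      rw [h0, norm_zero] at hnorm
      exact hxpos.ne' hnorm.symm
    exact sym x (‖x‖ • e₁) hx hne0 hnorm.symm
  · intro r hr s hs hrs
    have hr0 : (0:ℝ) < r := hr
    have hs0 : (0:ℝ) < s := hs
    have hrn : ‖(r:ℝ) • e₁‖ = r := by
      rw [norm_smul, Real.norm_eq_abs, abs_of_pos hr0, hne₁, mul_one]
    have hsn : ‖(s:ℝ) • e₁‖ = s := by
      rw [norm_smul, Real.norm_eq_abs, abs_of_pos hs0, hne₁, mul_one]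
    have hrne : (r:ℝ) • e₁ ≠ 0 := by
      intro h0; rw [h0, norm_zero] at hrn; exact hr0.ne' hrn.symm
    rcases lt_or_eq_of_le hrs with hlt | heq
    · exact key_lt u h (r • e₁) (s • e₁) hrne (by rw [hrn, hsn]; exact hlt)
    · rw [heq]
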